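/- Let A, B ∈ ℝ^{3×3} with A lower bidiagonal: A = [[a₁,0,0],[c₁,a₂,0],[0,c₂,a₃]], and B = [[0,0,b₁],[0,0,b₂],[0,0,0]]. Then (A, B) is diagonally Riccati stable if and only if: (i) a_i < 0 for i = 1,2,3; (ii) a₂a₃ > |b₂c₂|; (iii) |a₁a₂a₃| > |c₂(b₁c₁ - a₁b₂)|. -/

import Mathlib

set_option maxHeartbeats 1000000

open Matrix


lemma sq_nonpos_eq_zero {x : ℝ} (h : x^2 ≤ 0) : x = 0 :=
  (pow_eq_zero_iff two_ne_zero).mp (le_antisymm h (sq_nonneg x))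

lemma quadform3 (a b c e f : ℝ) (x : Fin 3 → ℝ) :
    dotProduct (star x) ((!![a,b,0;b,c,e;0,e,f] : Matrix (Fin 3) (Fin 3) ℝ) *ᵥ x)
      = a*(x 0)^2 + c*(x 1)^2 + f*(x 2)^2 + 2*b*(x 0)*(x 1) + 2*e*(x 1)*(x 2) := by
  simp [dotProduct, Matrix.mulVec, Fin.sum_univ_three]
  ring

lemma sylvester3 (a b c e f : ℝ) :
    (!![a,b,0;b,c,e;0,e,f] : Matrix (Fin 3) (Fin 3) ℝ).PosDef ↔
      0 < a ∧ 0 < a*c - b^2 ∧ 0 < (a*c - b^2)*f - a*e^2 := by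
  rw [Matrix.posDef_iff_dotProduct_mulVec]
  constructor
  · rintro ⟨hherm, hpos⟩
    have h1 : 0 < a := by
      have h := @hpos ![1,0,0] (by intro h; simpa using congrFun h 0)
      rw [quadform3] at h
      simpa using h
    have h2 : 0 < a*c - b^2 := by
      have h := @hpos ![b,-a,0] (by
        intro h
        have := congrFun h 1
        simp at this
        exact absurd this (ne_of_gt h1))
      rw [quadform3] at h
      simp at h
      nlinarith [h]
    have h3 : 0 < (a*c - b^2)*f - a*e^2 := by
      have hd : 0 < (!![a,b,0;b,c,e;0,e,f] : Matrix (Fin 3) (Fin 3) ℝ).det :=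
        Matrix.PosDef.det_pos (Matrix.posDef_iff_dotProduct_mulVec.mpr ⟨hherm, hpos⟩)
      rw [Matrix.det_fin_three] at hd
      simp at hd
      nlinarith [hd]
    exact ⟨h1, h2, h3⟩
  · rintro ⟨h1, h2, h3⟩
    constructor
    · ext i j
      fin_cases i <;> fin_cases j <;> simp [Matrix.conjTranspose_apply]
    · intro x hx
      rw [quadform3]
      by_contra hq
      push_neg at hq
      have hC : (a*(a*c-b^2)) * (a*(x 0)^2 + c*(x 1)^2 + f*(x 2)^2 + 2*b*(x 0)*(x 1) + 2*e*(x 1)*(x 2)) ≤ 0 :=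
        mul_nonpos_of_nonneg_of_nonpos (mul_pos h1 h2).le hq
      have key : (a*(a*c-b^2))*(a*(x 0)^2 + c*(x 1)^2 + f*(x 2)^2 + 2*b*(x 0)*(x 1) + 2*e*(x 1)*(x 2))
          = (a*c-b^2)*(a*(x 0) + b*(x 1))^2 + ((a*c-b^2)*(x 1) + a*e*(x 2))^2
            + (a*((a*c-b^2)*f - a*e^2))*(x 2)^2 := by ring
      rw [key] at hC
      have t1 : 0 ≤ (a*c-b^2)*(a*(x 0) + b*(x 1))^2 := mul_nonneg h2.le (sq_nonneg _)
      have t2 : 0 ≤ ((a*c-b^2)*(x 1) + a*e*(x 2))^2 := sq_nonneg _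
      have hx2 : x 2 = 0 := by
        refine sq_nonpos_eq_zero ?_
        nlinarith [mul_pos h1 h3]
      rw [hx2] at hC
      have hx1 : x 1 = 0 := by
        refine sq_nonpos_eq_zero ?_
        nlinarith [mul_pos h2 h2, sq_nonneg (a*(x 0) + b*(x 1))]
      rw [hx1] at hC
      have hx0 : x 0 = 0 := by
        refine sq_nonpos_eq_zero ?_
        nlinarith [mul_pos h2 (mul_pos h1 h1)]
      apply hx
      funext i
      fin_cases i <;> assumption


lemma diag3_eq (p₁ p₂ p₃ : ℝ) :
    Matrix.diagonal ![p₁,p₂,p₃] = !![p₁,0,0;0,p₂,0;0,0,p₃] := by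
  ext i j
  fin_cases i <;> fin_cases j <;> simp [Matrix.diagonal_apply, Matrix.vecHead, Matrix.vecTail]

lemma diag_inv (q₁ q₂ q₃ : ℝ) (h1 : q₁ ≠ 0) (h2 : q₂ ≠ 0) (h3 : q₃ ≠ 0) :
    (Matrix.diagonal ![q₁,q₂,q₃])⁻¹ = Matrix.diagonal ![q₁⁻¹,q₂⁻¹,q₃⁻¹] := by
  apply Matrix.inv_eq_right_inv
  rw [Matrix.diagonal_mul_diagonal]
  ext i j
  fin_cases i <;> fin_cases j <;> simp [Matrix.diagonal, h1, h2, h3]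

lemma transA (a₁ a₂ a₃ c₁ c₂ : ℝ) :
    (!![a₁, 0, 0; c₁, a₂, 0; 0, c₂, a₃] : Matrix (Fin 3) (Fin 3) ℝ)ᵀ
      = !![a₁, c₁, 0; 0, a₂, c₂; 0, 0, a₃] := by
  ext i j
  fin_cases i <;> fin_cases j <;> rfl

lemma transB (b₁ b₂ : ℝ) :
    (!![0, 0, b₁; 0, 0, b₂; 0, 0, 0] : Matrix (Fin 3) (Fin 3) ℝ)ᵀ
      = !![0, 0, 0; 0, 0, 0; b₁, b₂, 0] := by
  ext i j
  fin_cases i <;> fin_cases j <;> rfl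

lemma matrix_calc (a₁ a₂ a₃ c₁ c₂ b₁ b₂ p₁ p₂ p₃ q₁ q₂ q₃ : ℝ)
    (h1 : q₁ ≠ 0) (h2 : q₂ ≠ 0) (h3 : q₃ ≠ 0) :
    -((!![a₁, 0, 0; c₁, a₂, 0; 0, c₂, a₃] : Matrix (Fin 3) (Fin 3) ℝ)ᵀ * Matrix.diagonal ![p₁,p₂,p₃]
       + Matrix.diagonal ![p₁,p₂,p₃] * !![a₁, 0, 0; c₁, a₂, 0; 0, c₂, a₃]
       + Matrix.diagonal ![q₁,q₂,q₃]
       + Matrix.diagonal ![p₁,p₂,p₃] * !![0, 0, b₁; 0, 0, b₂; 0, 0, 0] * (Matrix.diagonal ![q₁,q₂,q₃])⁻¹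
         * (!![0, 0, b₁; 0, 0, b₂; 0, 0, 0] : Matrix (Fin 3) (Fin 3) ℝ)ᵀ * Matrix.diagonal ![p₁,p₂,p₃])
    = !![-(2*a₁*p₁ + q₁ + p₁^2*b₁^2/q₃), -(c₁*p₂ + p₁*p₂*b₁*b₂/q₃), 0;
         -(c₁*p₂ + p₁*p₂*b₁*b₂/q₃), -(2*a₂*p₂ + q₂ + p₂^2*b₂^2/q₃), -(c₂*p₃);
         0, -(c₂*p₃), -(2*a₃*p₃ + q₃)] := by
  rw [diag_inv _ _ _ h1 h2 h3, transA, transB, diag3_eq p₁ p₂ p₃, diag3_eq q₁ q₂ q₃,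
    diag3_eq q₁⁻¹ q₂⁻¹ q₃⁻¹]
  simp only [Matrix.mul_fin_three]
  ext i j
  fin_cases i <;> fin_cases j <;>
    · simp [Matrix.add_apply, Matrix.neg_apply]
      try ring


lemma amgm_sq {X Y L : ℝ} (hX : 0 ≤ X) (hY : 0 ≤ Y) (h : X + Y < L) : 4*(X*Y) < L^2 := by
  nlinarith [mul_pos (by linarith : (0:ℝ) < L - X - Y) (by linarith : (0:ℝ) < L + X + Y),
    sq_nonneg (X - Y)]

lemma fwd {a₁ a₂ a₃ c₁ c₂ b₁ b₂ p₁ p₂ p₃ q₁ q₂ s : ℝ}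
    (hp₁ : 0 < p₁) (hp₂ : 0 < p₂) (hp₃ : 0 < p₃) (hq₁ : 0 < q₁) (hq₂ : 0 < q₂) (hs : 0 < s)
    (H1 : 0 < -(2*a₁*p₁*s) - q₁*s - p₁^2*b₁^2)
    (H2 : 0 < (-(2*a₁*p₁*s) - q₁*s - p₁^2*b₁^2) * (-(2*a₂*p₂*s) - q₂*s - p₂^2*b₂^2)
            - (c₁*p₂*s + p₁*p₂*b₁*b₂)^2)
    (H3 : 0 < ((-(2*a₁*p₁*s) - q₁*s - p₁^2*b₁^2) * (-(2*a₂*p₂*s) - q₂*s - p₂^2*b₂^2)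
            - (c₁*p₂*s + p₁*p₂*b₁*b₂)^2) * (-(2*a₃*p₃) - s)
            - (-(2*a₁*p₁*s) - q₁*s - p₁^2*b₁^2) * (c₂^2*p₃^2*s)) :
    (a₁ < 0 ∧ a₂ < 0 ∧ a₃ < 0) ∧ |b₂ * c₂| < a₂ * a₃ ∧
      |c₂ * (b₁ * c₁ - a₁ * b₂)| < |a₁ * a₂ * a₃| := by
  have hA1 : a₁ < 0 := by nlinarith [mul_pos hp₁ hs, sq_nonneg (p₁*b₁), mul_pos hq₁ hs]
  have hP2 : 0 < -(2*a₂*p₂*s) - q₂*s - p₂^2*b₂^2 := by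
    nlinarith [sq_nonneg (c₁*p₂*s + p₁*p₂*b₁*b₂), H1, H2]
  have hA2 : a₂ < 0 := by nlinarith [mul_pos hp₂ hs, sq_nonneg (p₂*b₂), mul_pos hq₂ hs]
  have hd₃ : 0 < -(2*a₃*p₃) - s := by
    nlinarith [H2, H3, mul_nonneg H1.le (by positivity : (0:ℝ) ≤ c₂^2*p₃^2*s)]
  have hA3 : a₃ < 0 := by nlinarith [hp₃, hs]
  have hminor : 0 < (-(2*a₂*p₂*s) - q₂*s - p₂^2*b₂^2) * (-(2*a₃*p₃) - s) - c₂^2*p₃^2*s := by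
    nlinarith [H1, H3, mul_nonneg (sq_nonneg (c₁*p₂*s + p₁*p₂*b₁*b₂)) hd₃.le]
  have hDD1 : 0 < -(2*a₁*p₁*s) - p₁^2*b₁^2 := by nlinarith [mul_pos hq₁ hs]
  have hDD2 : 0 < -(2*a₂*p₂*s) - p₂^2*b₂^2 := by nlinarith [mul_pos hq₂ hs]
  have step1 : c₂^2*p₃^2*s < (-(2*a₂*p₂*s) - p₂^2*b₂^2) * (-(2*a₃*p₃) - s) := by
    nlinarith [hminor, mul_nonneg (mul_pos hq₂ hs).le hd₃.le]
  have k2 : (c₁*p₂*s + p₁*p₂*b₁*b₂)^2*(-(2*a₃*p₃) - s)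
      < (-(2*a₁*p₁*s) - p₁^2*b₁^2) * ((-(2*a₂*p₂*s) - p₂^2*b₂^2)*(-(2*a₃*p₃) - s) - c₂^2*p₃^2*s) := by
    nlinarith [H3, mul_nonneg (mul_pos hq₁ hs).le hminor.le,
      mul_nonneg (mul_nonneg hDD1.le (mul_pos hq₂ hs).le) hd₃.le]
  clear H1 H2 H3 hminor hP2
  have step2 : (-(2*a₃*p₃) - s)*s ≤ a₃^2*p₃^2 := by nlinarith [sq_nonneg (a₃*p₃ + s)]
  have hii : |b₂ * c₂| < a₂ * a₃ := by
    have hprod : 0 < a₂*a₃ := mul_pos_of_neg_of_neg hA2 hA3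
    rcases eq_or_ne b₂ 0 with hb | hb
    · rw [hb]; simpa using hprod
    have hbsq : 0 < b₂^2 := by positivity
    have step3 : c₂^2*p₃^2*s^2 < (-(2*a₂*p₂*s) - p₂^2*b₂^2) * (a₃^2*p₃^2) := by
      nlinarith [mul_lt_mul_of_pos_right step1 hs, mul_le_mul_of_nonneg_left step2 hDD2.le]
    have step4 : c₂^2*s^2 < (-(2*a₂*p₂*s) - p₂^2*b₂^2) * a₃^2 := by
      nlinarith [step3, mul_pos hp₃ hp₃]
    have step5 : b₂^2*(-(2*a₂*p₂*s) - p₂^2*b₂^2) ≤ a₂^2*s^2 := by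
      nlinarith [sq_nonneg (a₂*s + p₂*b₂^2)]
    have hbc : b₂^2*c₂^2 < a₂^2*a₃^2 := by
      have k : b₂^2*c₂^2*s^2 < a₂^2*s^2*a₃^2 := by
        nlinarith [mul_lt_mul_of_pos_left step4 hbsq,
          mul_le_mul_of_nonneg_right step5 (sq_nonneg a₃)]
      nlinarith [k, mul_pos hs hs]
    refine abs_lt_of_sq_lt_sq ?_ hprod.le
    calc (b₂*c₂)^2 = b₂^2*c₂^2 := by ring
      _ < a₂^2*a₃^2 := hbc
      _ = (a₂*a₃)^2 := by ring
  refine ⟨⟨hA1, hA2, hA3⟩, hii, ?_⟩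
  clear hii step1
  have k3 : p₂^2*((-(2*a₃*p₃) - s)*((-(2*a₁*p₁*s) - p₁^2*b₁^2)*b₂^2 + (c₁*s + p₁*b₁*b₂)^2))
      + (-(2*a₁*p₁*s) - p₁^2*b₁^2)*(c₂^2*p₃^2*s)
      < 2*(-a₂)*s*((-(2*a₁*p₁*s) - p₁^2*b₁^2)*p₂*(-(2*a₃*p₃) - s)) := by linarith [k2]
  clear k2
  have hG : 0 ≤ (-(2*a₁*p₁*s) - p₁^2*b₁^2)*b₂^2 + (c₁*s + p₁*b₁*b₂)^2 :=
    add_nonneg (mul_nonneg hDD1.le (sq_nonneg b₂)) (sq_nonneg _)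
  have hX : 0 ≤ p₂^2*((-(2*a₃*p₃) - s)*((-(2*a₁*p₁*s) - p₁^2*b₁^2)*b₂^2 + (c₁*s + p₁*b₁*b₂)^2)) :=
    mul_nonneg (sq_nonneg p₂) (mul_nonneg hd₃.le hG)
  have hY : 0 ≤ (-(2*a₁*p₁*s) - p₁^2*b₁^2)*(c₂^2*p₃^2*s) :=
    mul_nonneg hDD1.le (by positivity)
  have k4 := amgm_sq hX hY k3
  clear k3 hX hY
  have k5 : ((-(2*a₁*p₁*s) - p₁^2*b₁^2)*b₂^2 + (c₁*s + p₁*b₁*b₂)^2)*(c₂^2*p₃^2*s)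
      < a₂^2*s^2*((-(2*a₁*p₁*s) - p₁^2*b₁^2)*(-(2*a₃*p₃) - s)) := by
    have hc : (0:ℝ) < 4*(p₂^2*(-(2*a₃*p₃) - s)*(-(2*a₁*p₁*s) - p₁^2*b₁^2)) := by
      have := mul_pos (mul_pos (mul_pos hp₂ hp₂) hd₃) hDD1
      linarith [this]
    refine lt_of_mul_lt_mul_right ?_ hc.le
    linarith [k4]
  clear k4
  have k8 : ((-(2*a₁*p₁*s) - p₁^2*b₁^2)*b₂^2 + (c₁*s + p₁*b₁*b₂)^2)*c₂^2
      < a₂^2*a₃^2*(-(2*a₁*p₁*s) - p₁^2*b₁^2) := by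
    have hstep := mul_le_mul_of_nonneg_left step2
      (mul_nonneg (mul_nonneg (sq_nonneg a₂) hs.le) hDD1.le)
    have hc : (0:ℝ) < p₃^2*s := by positivity
    refine lt_of_mul_lt_mul_right ?_ hc.le
    linarith [k5, hstep]
  clear k5 step2
  have k9 : (-(2*a₁*p₁*s) - p₁^2*b₁^2)*(b₁*c₁ - a₁*b₂)^2
      ≤ a₁^2*((-(2*a₁*p₁*s) - p₁^2*b₁^2)*b₂^2 + (c₁*s + p₁*b₁*b₂)^2) := by
    linarith [sq_nonneg (a₁*c₁*s + p₁*b₁*(b₁*c₁ - a₁*b₂))]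
  have hA1sq : 0 < a₁^2 := by linarith [mul_pos_of_neg_of_neg hA1 hA1]
  have k10 : (-(2*a₁*p₁*s) - p₁^2*b₁^2)*(c₂^2*(b₁*c₁ - a₁*b₂)^2)
      < (-(2*a₁*p₁*s) - p₁^2*b₁^2)*(a₁^2*(a₂^2*a₃^2)) := by
    linarith [mul_lt_mul_of_pos_left k8 hA1sq,
      mul_le_mul_of_nonneg_left k9 (sq_nonneg c₂)]
  have k11 : c₂^2*(b₁*c₁ - a₁*b₂)^2 < a₁^2*(a₂^2*a₃^2) :=
    lt_of_mul_lt_mul_left k10 hDD1.le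
  have habs : 0 < |a₁*a₂*a₃| := by
    rw [abs_pos]
    intro h
    rcases mul_eq_zero.mp h with h' | h'
    · rcases mul_eq_zero.mp h' with h'' | h''
      · exact absurd h'' (ne_of_lt hA1)
      · exact absurd h'' (ne_of_lt hA2)
    · exact absurd h' (ne_of_lt hA3)
  refine abs_lt_of_sq_lt_sq ?_ habs.le
  have : |a₁*a₂*a₃|^2 = a₁^2*(a₂^2*a₃^2) := by rw [sq_abs]; ring
  rw [this]
  calc (c₂*(b₁*c₁ - a₁*b₂))^2 = c₂^2*(b₁*c₁ - a₁*b₂)^2 := by ring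
    _ < a₁^2*(a₂^2*a₃^2) := k11


lemma bwd2 {a₁ a₂ a₃ c₁ c₂ b₁ b₂ p₁ : ℝ} (hA1 : a₁ < 0) (hA2 : a₂ < 0) (hA3 : a₃ < 0)
    (hp₁ : 0 < p₁)
    (hE2' : 0 < a₂^2*a₃^2 - c₂^2*b₂^2)
    (hH : c₂^2*(c₁ + p₁*b₁*b₂)^2 < (a₂^2*a₃^2 - c₂^2*b₂^2) * (p₁*(-2*a₁ - p₁*b₁^2))) :
    ∃ p₁' p₂ p₃ q₁ q₂ q₃ : ℝ, 0 < p₁' ∧ 0 < p₂ ∧ 0 < p₃ ∧ 0 < q₁ ∧ 0 < q₂ ∧ 0 < q₃ ∧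
      0 < -(2*a₁*p₁' + q₁ + p₁'^2*b₁^2/q₃) ∧
      0 < (-(2*a₁*p₁' + q₁ + p₁'^2*b₁^2/q₃)) * (-(2*a₂*p₂ + q₂ + p₂^2*b₂^2/q₃))
          - (-(c₁*p₂ + p₁'*p₂*b₁*b₂/q₃))^2 ∧
      0 < ((-(2*a₁*p₁' + q₁ + p₁'^2*b₁^2/q₃)) * (-(2*a₂*p₂ + q₂ + p₂^2*b₂^2/q₃))
          - (-(c₁*p₂ + p₁'*p₂*b₁*b₂/q₃))^2) * (-(2*a₃*p₃ + q₃))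
          - (-(2*a₁*p₁' + q₁ + p₁'^2*b₁^2/q₃)) * (-(c₂*p₃))^2 := by
  have ha₃ : a₃ ≠ 0 := ne_of_lt hA3
  have ha₃sq : 0 < a₃^2 := by nlinarith [mul_pos_of_neg_of_neg hA3 hA3]
  have hD1 : 0 < p₁*(-2*a₁ - p₁*b₁^2) := by
    nlinarith [hH, hE2', sq_nonneg (c₂*(c₁ + p₁*b₁*b₂))]
  obtain ⟨d₁, hd₁def⟩ : ∃ d₁ : ℝ,
      d₁ = (c₂^2*(c₁ + p₁*b₁*b₂)^2/(a₂^2*a₃^2 - c₂^2*b₂^2) + p₁*(-2*a₁ - p₁*b₁^2))/2 := ⟨_, rfl⟩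
  have hd₁ : 0 < d₁ := by
    have h := div_nonneg (by positivity : (0:ℝ) ≤ c₂^2*(c₁ + p₁*b₁*b₂)^2) hE2'.le
    rw [hd₁def]; linarith
  have hd₁lt : d₁ < p₁*(-2*a₁ - p₁*b₁^2) := by
    have hx : c₂^2*(c₁ + p₁*b₁*b₂)^2/(a₂^2*a₃^2 - c₂^2*b₂^2) < p₁*(-2*a₁ - p₁*b₁^2) := by
      rw [div_lt_iff₀ hE2']; linarith
    rw [hd₁def]; linarith
  obtain ⟨q₁, hq₁def⟩ : ∃ q₁ : ℝ, q₁ = p₁*(-2*a₁ - p₁*b₁^2) - d₁ := ⟨_, rfl⟩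
  have hq₁ : 0 < q₁ := by rw [hq₁def]; linarith
  have key1 : c₂^2*(c₁ + p₁*b₁*b₂)^2 < (a₂^2*a₃^2 - c₂^2*b₂^2)*d₁ := by
    have e : (a₂^2*a₃^2 - c₂^2*b₂^2)*d₁
        = (c₂^2*(c₁ + p₁*b₁*b₂)^2 + (a₂^2*a₃^2 - c₂^2*b₂^2)*(p₁*(-2*a₁ - p₁*b₁^2)))/2 := by
      rw [hd₁def]; field_simp
    rw [e]; linarith
  obtain ⟨W, hWdef⟩ : ∃ W : ℝ, W = b₂^2 + (c₁ + p₁*b₁*b₂)^2/d₁ := ⟨_, rfl⟩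
  have hW : 0 ≤ W := by
    rw [hWdef]; exact add_nonneg (sq_nonneg b₂) (div_nonneg (sq_nonneg _) hd₁.le)
  have keyW : c₂^2*W < a₂^2*a₃^2 := by
    have h1 : c₂^2*(c₁ + p₁*b₁*b₂)^2/d₁ < a₂^2*a₃^2 - c₂^2*b₂^2 :=
      (div_lt_iff₀ hd₁).mpr (by linarith)
    have e : c₂^2*W = c₂^2*b₂^2 + c₂^2*(c₁ + p₁*b₁*b₂)^2/d₁ := by rw [hWdef]; ring
    rw [e]; linarith
  obtain ⟨τ, hτdef⟩ : ∃ τ : ℝ, τ = (a₂^2*a₃^2 - c₂^2*W)/(2*(c₂^2+1)) := ⟨_, rfl⟩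
  have hτ : 0 < τ := by rw [hτdef]; exact div_pos (by linarith) (by positivity)
  have keyτ : c₂^2*(W + τ) < a₂^2*a₃^2 := by
    have e : c₂^2*τ*(2*(c₂^2+1)) = c₂^2*(a₂^2*a₃^2 - c₂^2*W) := by
      rw [hτdef]; field_simp
    nlinarith [e, keyW, mul_nonneg (sq_nonneg c₂) (by linarith : (0:ℝ) ≤ a₂^2*a₃^2 - c₂^2*W),
      (by positivity : (0:ℝ) < 2*(c₂^2+1))]
  have hWτ : 0 < W + τ := by linarith
  obtain ⟨p₂, hp₂def⟩ : ∃ p₂ : ℝ, p₂ = -a₂/(W + τ) := ⟨_, rfl⟩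
  have hp₂ : 0 < p₂ := by rw [hp₂def]; exact div_pos (by linarith) hWτ
  obtain ⟨q₂, hq₂def⟩ : ∃ q₂ : ℝ, q₂ = (a₂^2/(W + τ) - c₂^2/a₃^2)/2 := ⟨_, rfl⟩
  have hq₂ : 0 < q₂ := by
    have h : c₂^2/a₃^2 < a₂^2/(W + τ) := by
      rw [div_lt_div_iff₀ ha₃sq hWτ]; linarith
    rw [hq₂def]; linarith
  obtain ⟨p₃, hp₃def⟩ : ∃ p₃ : ℝ, p₃ = 1/(-a₃) := ⟨_, rfl⟩
  have hp₃ : 0 < p₃ := by rw [hp₃def]; exact div_pos one_pos (by linarith)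
  -- core computations
  have stepB : p₂^2*b₂^2 + p₂^2*((c₁ + p₁*b₁*b₂)^2/d₁) = p₂^2*W := by rw [hWdef]; ring
  have stepC : p₂^2*W ≤ p₂^2*(W+τ) := by nlinarith [mul_nonneg (sq_nonneg p₂) hτ.le]
  have stepA : p₂^2*(W+τ) = a₂^2/(W+τ) := by
    rw [hp₂def]; field_simp
  have stepD : 2*(-a₂)*p₂ = 2*(a₂^2/(W+τ)) := by
    rw [hp₂def]; field_simp
  have eq2q : 2*q₂ = a₂^2/(W+τ) - c₂^2/a₃^2 := by rw [hq₂def]; ring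
  have key3 : q₂ + p₂^2*((c₁ + p₁*b₁*b₂)^2/d₁)
      ≤ -(2*a₂*p₂ + q₂ + p₂^2*b₂^2) - c₂^2/a₃^2 := by linarith
  have ecanc : d₁*(p₂^2*((c₁ + p₁*b₁*b₂)^2/d₁)) = p₂^2*(c₁ + p₁*b₁*b₂)^2 := by
    field_simp
  have hc3 : 0 < d₁*(-(2*a₂*p₂ + q₂ + p₂^2*b₂^2) - c₂^2/a₃^2) - p₂^2*(c₁ + p₁*b₁*b₂)^2 := by
    have h := mul_le_mul_of_nonneg_left key3 hd₁.le
    rw [mul_add] at h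
    rw [← ecanc]
    nlinarith [mul_pos hd₁ hq₂, h]
  have hc2 : 0 < d₁*(-(2*a₂*p₂ + q₂ + p₂^2*b₂^2)) - p₂^2*(c₁ + p₁*b₁*b₂)^2 := by
    have hnn : 0 ≤ d₁*(c₂^2/a₃^2) := mul_nonneg hd₁.le (div_nonneg (sq_nonneg c₂) ha₃sq.le)
    nlinarith [hc3, hnn]
  -- final assembly with q₃ = 1
  have e33 : -(2*a₃*p₃ + 1) = 1 := by rw [hp₃def]; field_simp; norm_num
  have e23 : (-(c₂*p₃))^2 = c₂^2/a₃^2 := by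
    rw [hp₃def]; field_simp
  have e11 : -(2*a₁*p₁ + q₁ + p₁^2*b₁^2/1) = d₁ := by rw [hq₁def]; ring
  have e12 : (-(c₁*p₂ + p₁*p₂*b₁*b₂/1))^2 = p₂^2*(c₁ + p₁*b₁*b₂)^2 := by ring
  have e22 : -(2*a₂*p₂ + q₂ + p₂^2*b₂^2/1) = -(2*a₂*p₂ + q₂ + p₂^2*b₂^2) := by ring
  refine ⟨p₁, p₂, p₃, q₁, q₂, 1, hp₁, hp₂, hp₃, hq₁, hq₂, one_pos, ?_, ?_, ?_⟩
  · rw [e11]; exact hd₁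
  · rw [e11, e12, e22]; linarith [hc2]
  · rw [e11, e12, e22, e33, e23, mul_one]; linarith [hc3]

lemma bwd {a₁ a₂ a₃ c₁ c₂ b₁ b₂ : ℝ} (hA1 : a₁ < 0) (hA2 : a₂ < 0) (hA3 : a₃ < 0)
    (h2 : |b₂ * c₂| < a₂ * a₃) (h3 : |c₂ * (b₁ * c₁ - a₁ * b₂)| < |a₁ * a₂ * a₃|) :
    ∃ p₁' p₂ p₃ q₁ q₂ q₃ : ℝ, 0 < p₁' ∧ 0 < p₂ ∧ 0 < p₃ ∧ 0 < q₁ ∧ 0 < q₂ ∧ 0 < q₃ ∧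
      0 < -(2*a₁*p₁' + q₁ + p₁'^2*b₁^2/q₃) ∧
      0 < (-(2*a₁*p₁' + q₁ + p₁'^2*b₁^2/q₃)) * (-(2*a₂*p₂ + q₂ + p₂^2*b₂^2/q₃))
          - (-(c₁*p₂ + p₁'*p₂*b₁*b₂/q₃))^2 ∧
      0 < ((-(2*a₁*p₁' + q₁ + p₁'^2*b₁^2/q₃)) * (-(2*a₂*p₂ + q₂ + p₂^2*b₂^2/q₃))
          - (-(c₁*p₂ + p₁'*p₂*b₁*b₂/q₃))^2) * (-(2*a₃*p₃ + q₃))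
          - (-(2*a₁*p₁' + q₁ + p₁'^2*b₁^2/q₃)) * (-(c₂*p₃))^2 := by
  have hprod : 0 < a₂ * a₃ := mul_pos_of_neg_of_neg hA2 hA3
  have hE2' : 0 < a₂^2*a₃^2 - c₂^2*b₂^2 := by
    nlinarith [mul_pos (lt_of_le_of_lt (abs_nonneg (b₂*c₂)) h2)
        (by linarith [abs_nonneg (b₂*c₂)] : (0:ℝ) < a₂*a₃ + |b₂*c₂|),
      sq_abs (b₂*c₂), h2, abs_nonneg (b₂*c₂), mul_pos hprod hprod,
      mul_pos (sub_pos.mpr h2) (by linarith [abs_nonneg (b₂*c₂)] : (0:ℝ) < a₂*a₃ + |b₂*c₂|)]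
  have habsneg : a₁*a₂*a₃ < 0 := by nlinarith [hprod]
  have hE3' : 0 < a₁^2*a₂^2*a₃^2 - c₂^2*(b₁*c₁ - a₁*b₂)^2 := by
    rw [abs_of_neg habsneg] at h3
    nlinarith [mul_pos (sub_pos.mpr h3)
        (by linarith [abs_nonneg (c₂*(b₁*c₁ - a₁*b₂))] :
          (0:ℝ) < -(a₁*a₂*a₃) + |c₂*(b₁*c₁ - a₁*b₂)|),
      sq_abs (c₂*(b₁*c₁ - a₁*b₂)), abs_nonneg (c₂*(b₁*c₁ - a₁*b₂))]
  obtain ⟨γ, hγdef⟩ : ∃ γ : ℝ, γ = -a₁*(a₂^2*a₃^2 - c₂^2*b₂^2) - c₂^2*c₁*b₁*b₂ := ⟨_, rfl⟩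
  have hA1sq : 0 < a₁^2 := by nlinarith [mul_pos_of_neg_of_neg hA1 hA1]
  have hγ : 0 < γ := by
    nlinarith [hγdef, hE3', mul_pos hA1sq hE2', sq_nonneg (c₂*b₁*c₁),
      (by linarith : (0:ℝ) < -2*a₁)]
  have hdisc : (b₁^2*(a₂^2*a₃^2))*(c₂^2*c₁^2) < γ^2 := by
    have hid : γ^2 - (b₁^2*(a₂^2*a₃^2))*(c₂^2*c₁^2)
        = (a₂^2*a₃^2 - c₂^2*b₂^2)*(a₁^2*a₂^2*a₃^2 - c₂^2*(b₁*c₁ - a₁*b₂)^2) := by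
      rw [hγdef]; ring
    nlinarith [mul_pos hE2' hE3', hid]
  rcases eq_or_ne b₁ 0 with hb | hb
  · -- b₁ = 0 : take p₁ = (c₂²c₁² + 1)/(2γ)
    subst hb
    have hγ0 : γ = -a₁*(a₂^2*a₃^2 - c₂^2*b₂^2) := by rw [hγdef]; ring
    refine bwd2 hA1 hA2 hA3 (p₁ := (c₂^2*c₁^2 + 1)/(2*γ)) ?_ hE2' ?_
    · exact div_pos (by positivity) (by linarith)
    · have h2γ : (2*γ) ≠ 0 := by positivity
      have e : (a₂^2*a₃^2 - c₂^2*b₂^2) * ((c₂^2*c₁^2 + 1)/(2*γ)*(-2*a₁ - (c₂^2*c₁^2 + 1)/(2*γ)*0^2))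
          = c₂^2*c₁^2 + 1 := by
        have h : (a₂^2*a₃^2 - c₂^2*b₂^2)*(-2*a₁) = 2*γ := by rw [hγ0]; ring
        calc (a₂^2*a₃^2 - c₂^2*b₂^2) * ((c₂^2*c₁^2 + 1)/(2*γ)*(-2*a₁ - (c₂^2*c₁^2 + 1)/(2*γ)*0^2))
            = ((c₂^2*c₁^2 + 1)/(2*γ))*((a₂^2*a₃^2 - c₂^2*b₂^2)*(-2*a₁)) := by ring
          _ = ((c₂^2*c₁^2 + 1)/(2*γ))*(2*γ) := by rw [h]
          _ = c₂^2*c₁^2 + 1 := div_mul_cancel₀ _ h2γ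
      calc c₂^2*(c₁ + (c₂^2*c₁^2 + 1)/(2*γ)*0*b₂)^2 = c₂^2*c₁^2 := by ring
        _ < c₂^2*c₁^2 + 1 := by linarith
        _ = _ := e.symm
  · -- b₁ ≠ 0 : take p₁ = γ/(b₁²a₂²a₃²)
    have hb2 : 0 < b₁^2 := by rcases hb.lt_or_gt with h|h <;> nlinarith
    have hα : 0 < b₁^2*(a₂^2*a₃^2) := mul_pos hb2 (by nlinarith [mul_pos hprod hprod])
    refine bwd2 hA1 hA2 hA3 (p₁ := γ/(b₁^2*(a₂^2*a₃^2))) (div_pos hγ hα) hE2' ?_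
    have key : (a₂^2*a₃^2 - c₂^2*b₂^2) * (γ/(b₁^2*(a₂^2*a₃^2))*(-2*a₁ - γ/(b₁^2*(a₂^2*a₃^2))*b₁^2))
        - c₂^2*(c₁ + γ/(b₁^2*(a₂^2*a₃^2))*b₁*b₂)^2
        = (γ^2 - (b₁^2*(a₂^2*a₃^2))*(c₂^2*c₁^2))/(b₁^2*(a₂^2*a₃^2)) := by
      rw [hγdef]; field_simp [ne_of_lt hA2, ne_of_lt hA3, hb]
      ring
    have hpos : 0 < (γ^2 - (b₁^2*(a₂^2*a₃^2))*(c₂^2*c₁^2))/(b₁^2*(a₂^2*a₃^2)) :=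
      div_pos (by linarith) hα
    linarith [key, hpos]

/-- The pair `(A, B)` is diagonally Riccati stable. -/
def DiagRiccatiStable {m : ℕ} (A B : Matrix (Fin m) (Fin m) ℝ) : Prop :=
  ∃ P Q : Matrix (Fin m) (Fin m) ℝ, P.IsDiag ∧ Q.IsDiag ∧ P.PosDef ∧ Q.PosDef ∧
    (-(Aᵀ * P + P * A + Q + P * B * Q⁻¹ * Bᵀ * P)).PosDef

theorem bidiagonal_3x3_riccati (a₁ a₂ a₃ c₁ c₂ b₁ b₂ : ℝ) :
    DiagRiccatiStable !![a₁, 0, 0; c₁, a₂, 0; 0, c₂, a₃]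
        !![0, 0, b₁; 0, 0, b₂; 0, 0, 0] ↔
      (a₁ < 0 ∧ a₂ < 0 ∧ a₃ < 0) ∧ |b₂ * c₂| < a₂ * a₃ ∧
        |c₂ * (b₁ * c₁ - a₁ * b₂)| < |a₁ * a₂ * a₃| := by
  constructor
  · rintro ⟨P, Q, hPd, hQd, hPp, hQp, hN⟩
    have hPeq : P = Matrix.diagonal ![P 0 0, P 1 1, P 2 2] := by
      rw [← hPd.diagonal_diag]
      congr 1
      funext i
      fin_cases i <;> rfl
    have hQeq : Q = Matrix.diagonal ![Q 0 0, Q 1 1, Q 2 2] := by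
      rw [← hQd.diagonal_diag]
      congr 1
      funext i
      fin_cases i <;> rfl
    rw [hPeq, Matrix.posDef_diagonal_iff] at hPp
    rw [hQeq, Matrix.posDef_diagonal_iff] at hQp
    have hp₁ : 0 < P 0 0 := by simpa using hPp 0
    have hp₂ : 0 < P 1 1 := by simpa using hPp 1
    have hp₃ : 0 < P 2 2 := by simpa using hPp 2
    have hq₁ : 0 < Q 0 0 := by simpa using hQp 0
    have hq₂ : 0 < Q 1 1 := by simpa using hQp 1
    have hs : 0 < Q 2 2 := by simpa using hQp 2
    rw [hPeq, hQeq, matrix_calc a₁ a₂ a₃ c₁ c₂ b₁ b₂ _ _ _ _ _ _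
      (ne_of_gt hq₁) (ne_of_gt hq₂) (ne_of_gt hs), sylvester3] at hN
    obtain ⟨S1, S2, S3⟩ := hN
    set p₁ := P 0 0
    set p₂ := P 1 1
    set p₃ := P 2 2
    set q₁ := Q 0 0
    set q₂ := Q 1 1
    set s := Q 2 2
    have hsne : s ≠ 0 := ne_of_gt hs
    have e1 : (-(2*a₁*p₁ + q₁ + p₁^2*b₁^2/s))*s = -(2*a₁*p₁*s) - q₁*s - p₁^2*b₁^2 := by
      field_simp
      ring
    have H1 : 0 < -(2*a₁*p₁*s) - q₁*s - p₁^2*b₁^2 := e1 ▸ mul_pos S1 hs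
    have e2 : ((-(2*a₁*p₁ + q₁ + p₁^2*b₁^2/s)) * (-(2*a₂*p₂ + q₂ + p₂^2*b₂^2/s))
          - (-(c₁*p₂ + p₁*p₂*b₁*b₂/s))^2)*s^2
        = (-(2*a₁*p₁*s) - q₁*s - p₁^2*b₁^2) * (-(2*a₂*p₂*s) - q₂*s - p₂^2*b₂^2)
            - (c₁*p₂*s + p₁*p₂*b₁*b₂)^2 := by
      field_simp
      ring
    have H2 : 0 < (-(2*a₁*p₁*s) - q₁*s - p₁^2*b₁^2) * (-(2*a₂*p₂*s) - q₂*s - p₂^2*b₂^2)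
        - (c₁*p₂*s + p₁*p₂*b₁*b₂)^2 := e2 ▸ mul_pos S2 (by positivity)
    have e3 : (((-(2*a₁*p₁ + q₁ + p₁^2*b₁^2/s)) * (-(2*a₂*p₂ + q₂ + p₂^2*b₂^2/s))
          - (-(c₁*p₂ + p₁*p₂*b₁*b₂/s))^2) * (-(2*a₃*p₃ + s))
          - (-(2*a₁*p₁ + q₁ + p₁^2*b₁^2/s)) * (-(c₂*p₃))^2)*s^2
        = ((-(2*a₁*p₁*s) - q₁*s - p₁^2*b₁^2) * (-(2*a₂*p₂*s) - q₂*s - p₂^2*b₂^2)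
            - (c₁*p₂*s + p₁*p₂*b₁*b₂)^2) * (-(2*a₃*p₃) - s)
            - (-(2*a₁*p₁*s) - q₁*s - p₁^2*b₁^2) * (c₂^2*p₃^2*s) := by
      field_simp
      ring
    have H3 : 0 < ((-(2*a₁*p₁*s) - q₁*s - p₁^2*b₁^2) * (-(2*a₂*p₂*s) - q₂*s - p₂^2*b₂^2)
            - (c₁*p₂*s + p₁*p₂*b₁*b₂)^2) * (-(2*a₃*p₃) - s)
            - (-(2*a₁*p₁*s) - q₁*s - p₁^2*b₁^2) * (c₂^2*p₃^2*s) :=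
      e3 ▸ mul_pos S3 (by positivity)
    exact fwd hp₁ hp₂ hp₃ hq₁ hq₂ hs H1 H2 H3
  · rintro ⟨⟨hA1, hA2, hA3⟩, h2, h3⟩
    obtain ⟨p₁, p₂, p₃, q₁, q₂, q₃, hp₁, hp₂, hp₃, hq₁, hq₂, hq₃, G1, G2, G3⟩ :=
      bwd hA1 hA2 hA3 h2 h3
    refine ⟨Matrix.diagonal ![p₁,p₂,p₃], Matrix.diagonal ![q₁,q₂,q₃],
      Matrix.isDiag_diagonal _, Matrix.isDiag_diagonal _,
      Matrix.PosDef.diagonal (fun i => by fin_cases i <;> simpa),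
      Matrix.PosDef.diagonal (fun i => by fin_cases i <;> simpa), ?_⟩
    rw [matrix_calc a₁ a₂ a₃ c₁ c₂ b₁ b₂ _ _ _ _ _ _
      (ne_of_gt hq₁) (ne_of_gt hq₂) (ne_of_gt hq₃), sylvester3]
    exact ⟨G1, G2, G3⟩
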